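/- Let v = (v₁, v₂) be a polynomial vector field. Then sym curl v = 0 if and only if there exist a₁, a₂, b ∈ ℝ with v₁ = a₁ + b·X₁ and v₂ = a₂ + b·X₂, i.e. v belongs to the lowest-order Raviart–Thomas space RT = {a + b x : a ∈ ℝ², b ∈ ℝ}. -/

import Mathlib

open MvPolynomial Matrix

/-- Real polynomials in two variables. -/
abbrev P2 := MvPolynomial (Fin 2) ℝ

/-- The matrix `curl v` of a polynomial vector field, defined row-wise:
`(curl v)_{i1} = ∂₂ vᵢ`, `(curl v)_{i2} = -∂₁ vᵢ`. -/
noncomputable def pcurl (v : Fin 2 → P2) : Matrix (Fin 2) (Fin 2) P2 :=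
  Matrix.of fun i j =>
    if j = 0 then pderiv (1 : Fin 2) (v i) else -(pderiv (0 : Fin 2) (v i))

/-- `sym curl v := (curl v + (curl v)ᵀ)/2`. -/
noncomputable def psymCurl (v : Fin 2 → P2) : Matrix (Fin 2) (Fin 2) P2 :=
  (1 / 2 : ℝ) • (pcurl v + (pcurl v)ᵀ)

/-- `div div τ := Σ_{i,j} ∂ᵢ∂ⱼ τ_{ij}`. -/
noncomputable def pdivDiv (τ : Matrix (Fin 2) (Fin 2) P2) : P2 :=
  ∑ i : Fin 2, ∑ j : Fin 2, pderiv i (pderiv j (τ i j))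

/-- The matrix `x xᵀ q` with `(i,j)`-entry `Xᵢ · Xⱼ · q`. -/
noncomputable def xxT (q : P2) : Matrix (Fin 2) (Fin 2) P2 :=
  Matrix.of fun i j => X i * X j * q

/-- The polynomial vector `x^⊥ = (X₂, -X₁)`. -/
noncomputable def xPerp : Fin 2 → P2 := ![X 1, -X 0]

/-- `rot τ`, with components `(rot τ)ᵢ = ∂₁ τ_{i2} - ∂₂ τ_{i1}`. -/
noncomputable def prot (τ : Matrix (Fin 2) (Fin 2) P2) : Fin 2 → P2 :=
  fun i => pderiv (0 : Fin 2) (τ i 1) - pderiv (1 : Fin 2) (τ i 0)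

/-- The Hessian matrix `∇²q` with entries `∂ᵢ∂ⱼ q`. -/
noncomputable def phess (q : P2) : Matrix (Fin 2) (Fin 2) P2 :=
  Matrix.of fun i j => pderiv i (pderiv j q)

/-- `sym(x^⊥ ⊗ v)`, the symmetric matrix with `(i,j)`-entry
`((x^⊥)ᵢ vⱼ + vᵢ (x^⊥)ⱼ)/2`. -/
noncomputable def symTen (v : Fin 2 → P2) : Matrix (Fin 2) (Fin 2) P2 :=
  Matrix.of fun i j => (1 / 2 : ℝ) • (xPerp i * v j + v i * xPerp j)

/-- The gradient matrix `∇v` with entries `(∇v)_{ij} = ∂ⱼ vᵢ`. -/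
noncomputable def pgrad (v : Fin 2 → P2) : Matrix (Fin 2) (Fin 2) P2 :=
  Matrix.of fun i j => pderiv j (v i)

/-- The symmetric gradient `def v := (∇v + (∇v)ᵀ)/2`. -/
noncomputable def pdef (v : Fin 2 → P2) : Matrix (Fin 2) (Fin 2) P2 :=
  (1 / 2 : ℝ) • (pgrad v + (pgrad v)ᵀ)

/-- The matrix `x^⊥ (x^⊥)ᵀ q` with `(i,j)`-entry `(x^⊥)ᵢ (x^⊥)ⱼ q`. -/
noncomputable def xPerpxPerpT (q : P2) : Matrix (Fin 2) (Fin 2) P2 :=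
  Matrix.of fun i j => xPerp i * xPerp j * q

/-- `rot rot τ := ∂₁(rot τ)₂ − ∂₂(rot τ)₁`. -/
noncomputable def protRot (τ : Matrix (Fin 2) (Fin 2) P2) : P2 :=
  pderiv (0 : Fin 2) (prot τ 1) - pderiv (1 : Fin 2) (prot τ 0)

lemma coeff_pderiv' (i : Fin 2) (p : P2) (m : Fin 2 →₀ ℕ) :
    coeff m (pderiv i p) = ((m i : ℝ) + 1) * coeff (m + Finsupp.single i 1) p := by
  induction p using MvPolynomial.induction_on' with
  | add p q hp hq => simp [hp, hq, mul_add]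
  | monomial s a =>
    rw [pderiv_monomial, coeff_monomial, coeff_monomial]
    by_cases h2 : s = m + Finsupp.single i 1
    · have h1 : s - Finsupp.single i 1 = m := by simp [h2]
      have hsi : s i = m i + 1 := by simp [h2]
      simp [h1, h2, hsi]; ring
    · rw [if_neg h2]
      by_cases h1 : s - Finsupp.single i 1 = m
      · by_cases hsi : s i = 0
        · simp [h1, hsi]
        · exfalso; apply h2
          have hle : Finsupp.single i 1 ≤ s := by
            rw [Finsupp.single_le_iff]; omega
          rw [← h1, tsub_add_cancel_of_le hle]
      · simp [h1]

lemma pderiv_comm' (p : P2) (i j : Fin 2) :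
    pderiv i (pderiv j p) = pderiv j (pderiv i p) := by
  ext m
  rw [coeff_pderiv', coeff_pderiv', coeff_pderiv', coeff_pderiv']
  rw [show m + Finsupp.single i 1 + Finsupp.single j 1
      = m + Finsupp.single j 1 + Finsupp.single i 1 by abel]
  simp [Finsupp.add_apply, Finsupp.single_apply]
  by_cases h : i = j <;> simp [h, Ne.symm] <;> ring

lemma eq_C_of_pderiv (p : P2) (h0 : pderiv 0 p = 0) (h1 : pderiv 1 p = 0) :
    p = C (coeff 0 p) := by
  ext m
  rw [coeff_C]
  by_cases hm : m = 0
  · simp [hm]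
  · rw [if_neg (by exact fun h => hm h.symm)]
    obtain ⟨i, hi⟩ : ∃ i, m i ≠ 0 := by
      by_contra h; push_neg at h; exact hm (Finsupp.ext fun i => h i)
    have hle : Finsupp.single i 1 ≤ m := by rw [Finsupp.single_le_iff]; omega
    have key := coeff_pderiv' i p (m - Finsupp.single i 1)
    rw [tsub_add_cancel_of_le hle] at key
    have hz : pderiv i p = 0 := by fin_cases i <;> assumption
    rw [hz, coeff_zero] at key
    have := (mul_eq_zero.1 key.symm).resolve_left (by positivity)
    exact this


/-- `sym curl v = 0` iff `v` is in the lowest-order Raviart–Thomas space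
`RT = {a + b x : a ∈ ℝ², b ∈ ℝ}`. -/
theorem stmt_3 (v : Fin 2 → P2) :
    psymCurl v = 0 ↔
      ∃ (a₁ a₂ b : ℝ), v 0 = C a₁ + C b * X 0 ∧ v 1 = C a₂ + C b * X 1 := by
  constructor
  · intro h
    have e00 := congr_fun (congr_fun h 0) 0
    have e11 := congr_fun (congr_fun h 1) 1
    have e01 := congr_fun (congr_fun h 0) 1
    simp [psymCurl, pcurl, Matrix.smul_apply, Matrix.add_apply,
      Matrix.transpose_apply, smul_eq_zero, add_self_eq_zero,
      neg_add_eq_zero] at e00 e11 e01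
    have e01' : pderiv (0:Fin 2) (v 0) = pderiv (1:Fin 2) (v 1) := by
      have := congrArg (fun p : P2 => (2:ℝ) • p) e01
      simpa [smul_smul] using this
    have hw1 : pderiv (1:Fin 2) (pderiv (0:Fin 2) (v 0)) = 0 := by
      rw [pderiv_comm', e00, map_zero]
    have hw0 : pderiv (0:Fin 2) (pderiv (0:Fin 2) (v 0)) = 0 := by
      rw [e01', pderiv_comm', e11, map_zero]
    have hwC := eq_C_of_pderiv _ hw0 hw1
    set b := coeff 0 (pderiv (0:Fin 2) (v 0)) with hb
    have hp0 : pderiv (0:Fin 2) (v 0 - C b * X 0) = 0 := by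
      rw [map_sub, pderiv_C_mul, pderiv_X_self, mul_one, hwC, sub_self]
    have hp1 : pderiv (1:Fin 2) (v 0 - C b * X 0) = 0 := by
      simp [pderiv_C_mul, e00, pderiv_X_of_ne (show (0:Fin 2) ≠ 1 by decide)]
    have hq1 : pderiv (1:Fin 2) (v 1 - C b * X 1) = 0 := by
      rw [map_sub, pderiv_C_mul, pderiv_X_self, mul_one, ← e01', hwC, sub_self]
    have hq0 : pderiv (0:Fin 2) (v 1 - C b * X 1) = 0 := by
      simp [pderiv_C_mul, e11, pderiv_X_of_ne (show (1:Fin 2) ≠ 0 by decide)]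
    refine ⟨coeff 0 (v 0 - C b * X 0), coeff 0 (v 1 - C b * X 1), b, ?_, ?_⟩
    · have := eq_C_of_pderiv _ hp0 hp1
      linear_combination this
    · have := eq_C_of_pderiv _ hq0 hq1
      linear_combination this
  · rintro ⟨a₁, a₂, b, h1, h2⟩
    ext i j
    fin_cases i <;> fin_cases j <;>
      simp [psymCurl, pcurl, h1, h2, Matrix.smul_apply, Matrix.add_apply,
        Matrix.transpose_apply, pderiv_C_mul, pderiv_X_self,
        pderiv_X_of_ne (show (0:Fin 2) ≠ 1 by decide),
        pderiv_X_of_ne (show (1:Fin 2) ≠ 0 by decide)]
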